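/- Let D₁ and D₂ be properly convex open sets in the real projective plane with the closure of D₂ contained in D₁. Then there exists a constant C > 1 such that for all x, y ∈ D₂, the Hilbert distance d_{D₂}(x,y) ≥ C · d_{D₁}(x,y). -/

import Mathlib

lemma key_ineq {L s δ Δ s' : ℝ} (hL : 0 < L) (hs : 0 < s) (hδ : 0 < δ)
    (hs' : s + δ ≤ s') (hLΔ : L ≤ Δ) (hsΔ : s ≤ Δ) :
    (1 + δ / (2 * (Δ + 1))) * Real.log (1 + L / s') ≤ Real.log (1 + L / s) := by
  have hΔ : 0 < Δ := lt_of_lt_of_le hL hLΔ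
  set ε := δ / (2 * (Δ + 1)) with hε_def
  have hε : 0 < ε := by positivity
  have hs'pos : 0 < s' := by linarith
  have hsδ : 0 < s + δ := by linarith
  -- step 1 : log (1 + L/s') ≤ log (1 + L/(s+δ))
  have step1 : Real.log (1 + L / s') ≤ Real.log (1 + L / (s + δ)) := by
    have h1 : (0:ℝ) < 1 + L / s' := by positivity
    have h2 : 1 + L / s' ≤ 1 + L / (s + δ) := by gcongr
    exact Real.log_le_log h1 h2
  have main : (1 + ε) * Real.log (1 + L / (s + δ)) ≤ Real.log (1 + L / s) := by
    set A := Real.log (1 + L / (s + δ)) with hA_def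
    have hA_le : A ≤ L / (s + δ) := by
      have := Real.log_le_sub_one_of_pos (x := 1 + L / (s + δ)) (by positivity)
      linarith
    set u := L * δ / ((s + (δ + L)) * s) with hu_def
    have hu : 0 < u := by positivity
    have hq : (1 + L / s) / (1 + L / (s + δ)) = 1 + u := by
      rw [div_eq_iff (by positivity), hu_def]
      field_simp
      ring
    have hdiff : Real.log (1 + L / s) - A = Real.log (1 + u) := by
      rw [hA_def, ← Real.log_div (by positivity) (by positivity), hq]
    have hlog_lb : u / (1 + u) ≤ Real.log (1 + u) := by
      have := Real.log_le_sub_one_of_pos (x := (1 + u)⁻¹) (by positivity)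
      rw [Real.log_inv] at this
      have h1u : (0:ℝ) < 1 + u := by positivity
      have : 1 - (1 + u)⁻¹ ≤ Real.log (1 + u) := by linarith
      calc u / (1 + u) = 1 - (1 + u)⁻¹ := by field_simp; ring
        _ ≤ Real.log (1 + u) := this
    have huval : u / (1 + u) = L * δ / ((s + L) * (s + δ)) := by
      rw [hu_def]
      field_simp
      ring
    have hεA : ε * A ≤ L * δ / ((s + L) * (s + δ)) := by
      have h1 : ε * A ≤ ε * (L / (s + δ)) :=
        mul_le_mul_of_nonneg_left hA_le hε.le
      have h2 : ε * (L / (s + δ)) ≤ L * δ / ((s + L) * (s + δ)) := by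
        rw [hε_def, div_mul_div_comm, mul_comm δ L]
        apply div_le_div_of_nonneg_left (by positivity) (by positivity)
        nlinarith
      linarith
    nlinarith [hlog_lb, hdiff, huval]
  calc (1 + ε) * Real.log (1 + L / s') ≤ (1 + ε) * Real.log (1 + L / (s + δ)) := by
        apply mul_le_mul_of_nonneg_left step1 (by linarith)
    _ ≤ Real.log (1 + L / s) := main

lemma ray_hit (D : Set (ℝ × ℝ)) (hc : Convex ℝ D) (ho : IsOpen D)
    (hb : Bornology.IsBounded D) {x v : ℝ × ℝ} (hx : x ∈ D) (hv : v ≠ 0) :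
    ∃ T : ℝ, 0 < T ∧ x + T • v ∈ frontier D ∧
      (∀ s, 0 ≤ s → s < T → x + s • v ∈ D) ∧
      (∀ u, 0 ≤ u → x + u • v ∈ D → u < T) := by
  have hvn : 0 < ‖v‖ := norm_pos_iff.mpr hv
  set S : Set ℝ := {t : ℝ | 0 ≤ t ∧ x + t • v ∈ D} with hS_def
  have h0S : (0:ℝ) ∈ S := by simp [hS_def, hx]
  have hSne : S.Nonempty := ⟨0, h0S⟩
  -- S bounded above
  obtain ⟨R, hR⟩ := (Metric.isBounded_iff_subset_ball x).mp hb
  have hbdd : BddAbove S := by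
    refine ⟨R / ‖v‖, fun t ht => ?_⟩
    have h2 := hR ht.2
    rw [Metric.mem_ball, dist_eq_norm] at h2
    have : ‖x + t • v - x‖ = t * ‖v‖ := by
      rw [add_sub_cancel_left, norm_smul, Real.norm_eq_abs, abs_of_nonneg ht.1]
    rw [this] at h2
    exact (le_div_iff₀ hvn).mpr h2.le
  -- S is downward closed within nonneg
  have hdc : ∀ t ∈ S, ∀ s, 0 ≤ s → s ≤ t → s ∈ S := by
    rintro t ⟨ht0, htD⟩ s hs0 hst
    refine ⟨hs0, ?_⟩
    rcases eq_or_lt_of_le (hs0.trans hst) with h | htpos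
    · have : s = 0 := le_antisymm (hst.trans h.symm.le) hs0
      simpa [this] using hx
    · have key : x + s • v = (1 - s / t) • x + (s / t) • (x + t • v) := by
        have ht : t ≠ 0 := ne_of_gt htpos
        rw [smul_add, smul_smul, div_mul_cancel₀ _ ht]
        module
      rw [key]
      have hst' : s / t ≤ 1 := (div_le_one htpos).mpr hst
      exact hc hx htD (by linarith) (by positivity) (by ring)
  set T := sSup S with hT_def
  have hTmem_lt : ∀ s, 0 ≤ s → s < T → x + s • v ∈ D := by
    intro s hs0 hsT
    obtain ⟨t, htS, hst⟩ := exists_lt_of_lt_csSup hSne hsT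
    exact (hdc t htS s hs0 hst.le).2
  -- T > 0
  obtain ⟨ε, hε, hball⟩ := Metric.isOpen_iff.mp ho x hx
  have hTpos : 0 < T := by
    have hmem : ε / (2 * ‖v‖) ∈ S := by
      refine ⟨by positivity, hball ?_⟩
      rw [Metric.mem_ball, dist_eq_norm, add_sub_cancel_left, norm_smul,
        Real.norm_eq_abs, abs_of_nonneg (by positivity)]
      have heq : ε / (2 * ‖v‖) * ‖v‖ = ε / 2 := by field_simp
      have heq2 : ‖v‖ * (ε / (2 * ‖v‖)) = ε / 2 := by field_simp
      linarith
    have := le_csSup hbdd hmem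
    have hp : 0 < ε / (2 * ‖v‖) := by positivity
    linarith
  -- x + T • v ∉ D
  have hTnot : x + T • v ∉ D := by
    intro hmem
    obtain ⟨ε', hε', hball'⟩ := Metric.isOpen_iff.mp ho _ hmem
    have hmem' : T + ε' / (2 * ‖v‖) ∈ S := by
      refine ⟨by positivity, hball' ?_⟩
      rw [Metric.mem_ball, dist_eq_norm]
      have : x + (T + ε' / (2 * ‖v‖)) • v - (x + T • v) = (ε' / (2 * ‖v‖)) • v := by
        module
      rw [this, norm_smul, Real.norm_eq_abs, abs_of_nonneg (by positivity)]
      have heq : ε' / (2 * ‖v‖) * ‖v‖ = ε' / 2 := by field_simp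
      have heq2 : ‖v‖ * (ε' / (2 * ‖v‖)) = ε' / 2 := by field_simp
      linarith
    have := le_csSup hbdd hmem'
    have hp : 0 < ε' / (2 * ‖v‖) := by positivity
    linarith
  -- x + T • v ∈ closure D
  have hTcl : x + T • v ∈ closure D := by
    have htend : Filter.Tendsto (fun s : ℝ => x + s • v) (nhdsWithin T (Set.Iio T)) (nhds (x + T • v)) := by
      apply Filter.Tendsto.mono_left _ nhdsWithin_le_nhds
      exact Filter.Tendsto.const_add _ ((continuous_id.smul continuous_const).tendsto T)
    have hev : ∀ᶠ s in nhdsWithin T (Set.Iio T), x + s • v ∈ D := by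
      have h1 : ∀ᶠ s in nhdsWithin T (Set.Iio T), (0:ℝ) < s := by
        apply Filter.Eventually.filter_mono nhdsWithin_le_nhds
        exact eventually_gt_nhds hTpos
      have h2 : ∀ᶠ s in nhdsWithin T (Set.Iio T), s < T :=
        eventually_mem_nhdsWithin.mono (fun s hs => hs)
      filter_upwards [h1, h2] with s hs1 hs2
      exact hTmem_lt s hs1.le hs2
    exact mem_closure_of_tendsto htend hev
  have hfr : x + T • v ∈ frontier D := by
    rw [ho.frontier_eq]
    exact ⟨hTcl, hTnot⟩
  refine ⟨T, hTpos, hfr, hTmem_lt, ?_⟩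
  intro u hu0 huD
  by_contra h
  push_neg at h
  rcases eq_or_lt_of_le h with heq | hlt
  · exact hTnot (heq ▸ huD)
  · have : x + T • v = (1 - T / u) • x + (T / u) • (x + u • v) := by
      have hu : u ≠ 0 := ne_of_gt (hTpos.trans hlt)
      rw [smul_add, smul_smul, div_mul_cancel₀ _ hu]
      module
    have hTu : T / u < 1 := (div_lt_one (hTpos.trans hlt)).mpr hlt
    have : x + T • v ∈ D := by
      rw [this]
      have hTu0 : 0 < T / u := div_pos hTpos (hTpos.trans hlt)
      exact hc hx huD (by linarith) hTu0.le (by ring)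
    exact hTnot this

/-- A properly convex domain in an affine chart of the projective plane. -/
def ProperlyConvex (D : Set (ℝ × ℝ)) : Prop :=
  Convex ℝ D ∧ IsOpen D ∧ Bornology.IsBounded D ∧ D.Nonempty

/-- `d` is the Hilbert metric of `D`: `d x y = (1/2) log [a:x:y:b]` where `a, b` are
the boundary points of the chord through `x, y` with `a, y` separating `x, b`. -/
def IsHilbertDist (D : Set (ℝ × ℝ)) (d : ℝ × ℝ → ℝ × ℝ → ℝ) : Prop :=
  (∀ x ∈ D, d x x = 0) ∧
  ∀ x ∈ D, ∀ y ∈ D, x ≠ y →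
    ∀ a ∈ frontier D, ∀ b ∈ frontier D,
      x ∈ openSegment ℝ a y → y ∈ openSegment ℝ x b →
      d x y = (1 / 2) * Real.log ((dist a y / dist a x) * (dist b x / dist b y))

lemma hilbert_value (D : Set (ℝ × ℝ)) (d : ℝ × ℝ → ℝ × ℝ → ℝ)
    (hc : Convex ℝ D) (ho : IsOpen D) (hb : Bornology.IsBounded D)
    (hd : IsHilbertDist D d) {x y : ℝ × ℝ} (hx : x ∈ D) (hy : y ∈ D) (hxy : x ≠ y) :
    ∃ S T : ℝ, 1 < S ∧ 1 < T ∧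
      y + S • (x - y) ∈ frontier D ∧ x + T • (y - x) ∈ frontier D ∧
      (∀ u, 0 ≤ u → y + u • (x - y) ∈ D → u < S) ∧
      (∀ u, 0 ≤ u → x + u • (y - x) ∈ D → u < T) ∧
      d x y = (1 / 2) * (Real.log (1 + dist x y / ((S - 1) * dist x y)) +
                         Real.log (1 + dist x y / ((T - 1) * dist x y))) := by
  have hL : 0 < dist x y := dist_pos.2 hxy
  have hv : x - y ≠ 0 := sub_ne_zero.mpr hxy
  have hw : y - x ≠ 0 := sub_ne_zero.mpr (Ne.symm hxy)
  obtain ⟨S, hS0, hSfr, _, hSmax⟩ := ray_hit D hc ho hb hy hv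
  obtain ⟨T, hT0, hTfr, _, hTmax⟩ := ray_hit D hc ho hb hx hw
  have hx1 : y + (1:ℝ) • (x - y) = x := by module
  have hy1 : x + (1:ℝ) • (y - x) = y := by module
  have hS1 : 1 < S := hSmax 1 zero_le_one (by rw [hx1]; exact hx)
  have hT1 : 1 < T := hTmax 1 zero_le_one (by rw [hy1]; exact hy)
  refine ⟨S, T, hS1, hT1, hSfr, hTfr, hSmax, hTmax, ?_⟩
  set a := y + S • (x - y) with ha_def
  set b := x + T • (y - x) with hb_def
  have hSne : S ≠ 0 := by linarith
  have hTne : T ≠ 0 := by linarith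
  have hseg1 : x ∈ openSegment ℝ a y := by
    refine ⟨1 / S, 1 - 1 / S, by positivity, ?_, by ring, ?_⟩
    · have : 1 / S < 1 := by rw [div_lt_one (by linarith)]; exact hS1
      linarith
    · rw [ha_def]; match_scalars <;> (field_simp; try ring)
  have hseg2 : y ∈ openSegment ℝ x b := by
    refine ⟨1 - 1 / T, 1 / T, ?_, by positivity, by ring, ?_⟩
    · have : 1 / T < 1 := by rw [div_lt_one (by linarith)]; exact hT1
      linarith
    · rw [hb_def]; match_scalars <;> (field_simp; try ring)
  have hval := hd.2 x hx y hy hxy a hSfr b hTfr hseg1 hseg2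
  have hnd : ‖x - y‖ = dist x y := (dist_eq_norm x y).symm
  have hnd' : ‖y - x‖ = dist x y := by rw [← dist_eq_norm, dist_comm]
  have hd_ay : dist a y = S * dist x y := by
    have e : a - y = S • (x - y) := by rw [ha_def]; module
    rw [dist_eq_norm, e, norm_smul, Real.norm_eq_abs, abs_of_pos hS0, hnd]
  have hd_ax : dist a x = (S - 1) * dist x y := by
    have e : a - x = (S - 1) • (x - y) := by rw [ha_def]; module
    rw [dist_eq_norm, e, norm_smul, Real.norm_eq_abs, abs_of_pos (by linarith), hnd]
  have hd_bx : dist b x = T * dist x y := by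
    have e : b - x = T • (y - x) := by rw [hb_def]; module
    rw [dist_eq_norm, e, norm_smul, Real.norm_eq_abs, abs_of_pos hT0, hnd']
  have hd_by : dist b y = (T - 1) * dist x y := by
    have e : b - y = (T - 1) • (y - x) := by rw [hb_def]; module
    rw [dist_eq_norm, e, norm_smul, Real.norm_eq_abs, abs_of_pos (by linarith), hnd']
  rw [hval, hd_ay, hd_ax, hd_bx, hd_by]
  have hp : (0:ℝ) < 1 + dist x y / ((S - 1) * dist x y) := by
    have : (0:ℝ) < (S - 1) * dist x y := by nlinarith
    positivity
  have hq : (0:ℝ) < 1 + dist x y / ((T - 1) * dist x y) := by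
    have : (0:ℝ) < (T - 1) * dist x y := by nlinarith
    positivity
  rw [← Real.log_mul (ne_of_gt hp) (ne_of_gt hq)]
  congr 2
  have hS1' : S - 1 ≠ 0 := by linarith
  have hT1' : T - 1 ≠ 0 := by linarith
  field_simp
  ring


/-- Expansion of the Hilbert metric under strict inclusion of properly convex domains. -/
theorem hilbert_metric_expansion (D₁ D₂ : Set (ℝ × ℝ))
    (h₁ : ProperlyConvex D₁) (h₂ : ProperlyConvex D₂)
    (hsub : closure D₂ ⊆ D₁)
    (d₁ d₂ : ℝ × ℝ → ℝ × ℝ → ℝ)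
    (hd₁ : IsHilbertDist D₁ d₁) (hd₂ : IsHilbertDist D₂ d₂) :
    ∃ C : ℝ, 1 < C ∧ ∀ x ∈ D₂, ∀ y ∈ D₂, C * d₁ x y ≤ d₂ x y := by
  obtain ⟨hc₁, ho₁, hb₁, hne₁⟩ := h₁
  obtain ⟨hc₂, ho₂, hb₂, hne₂⟩ := h₂
  have hD21 : D₂ ⊆ D₁ := fun z hz => hsub (subset_closure hz)
  have hK : IsCompact (closure D₂) := hb₂.isCompact_closure
  have hopen : IsOpen (frontier D₁)ᶜ := isClosed_frontier.isOpen_compl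
  have hsubc : closure D₂ ⊆ (frontier D₁)ᶜ := by
    intro z hz hzf
    rw [ho₁.frontier_eq] at hzf
    exact hzf.2 (hsub hz)
  obtain ⟨δ, hδ, hthick⟩ := hK.exists_thickening_subset_open hopen hsubc
  have hgap : ∀ p ∈ closure D₂, ∀ q ∈ frontier D₁, δ ≤ dist p q := by
    intro p hp q hq
    by_contra h
    push_neg at h
    exact hthick (Metric.mem_thickening_iff.mpr ⟨p, hp, by rwa [dist_comm]⟩) hq
  set Δ := Metric.diam (closure D₂) with hΔ_def
  have hΔ0 : 0 ≤ Δ := Metric.diam_nonneg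
  have hCpos : 0 < δ / (2 * (Δ + 1)) := by positivity
  refine ⟨1 + δ / (2 * (Δ + 1)), by linarith, ?_⟩
  intro x hx y hy
  by_cases hxy : x = y
  · subst hxy
    rw [hd₁.1 x (hD21 hx), hd₂.1 x hx]
    simp
  · obtain ⟨S₂, T₂, hS₂1, hT₂1, hafr₂, hbfr₂, hSmax₂, hTmax₂, hval₂⟩ :=
      hilbert_value D₂ d₂ hc₂ ho₂ hb₂ hd₂ hx hy hxy
    obtain ⟨S₁, T₁, hS₁1, hT₁1, hafr₁, hbfr₁, hSmax₁, hTmax₁, hval₁⟩ :=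
      hilbert_value D₁ d₁ hc₁ ho₁ hb₁ hd₁ (hD21 hx) (hD21 hy) hxy
    have hL : 0 < dist x y := dist_pos.2 hxy
    have hS21 : S₂ < S₁ :=
      hSmax₁ S₂ (by linarith) (hsub (frontier_subset_closure hafr₂))
    have hT21 : T₂ < T₁ :=
      hTmax₁ T₂ (by linarith) (hsub (frontier_subset_closure hbfr₂))
    have hnd : ‖x - y‖ = dist x y := (dist_eq_norm x y).symm
    have hnd' : ‖y - x‖ = dist x y := by rw [← dist_eq_norm, dist_comm]
    have hdista : dist (y + S₂ • (x - y)) (y + S₁ • (x - y)) = (S₁ - S₂) * dist x y := by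
      have e : (y + S₂ • (x - y)) - (y + S₁ • (x - y)) = (S₂ - S₁) • (x - y) := by module
      rw [dist_eq_norm, e, norm_smul, Real.norm_eq_abs, abs_of_neg (by linarith), hnd]
      ring
    have hdistb : dist (x + T₂ • (y - x)) (x + T₁ • (y - x)) = (T₁ - T₂) * dist x y := by
      have e : (x + T₂ • (y - x)) - (x + T₁ • (y - x)) = (T₂ - T₁) • (y - x) := by module
      rw [dist_eq_norm, e, norm_smul, Real.norm_eq_abs, abs_of_neg (by linarith), hnd']
      ring
    have hga : δ ≤ (S₁ - S₂) * dist x y := by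
      rw [← hdista]
      exact hgap _ (frontier_subset_closure hafr₂) _ hafr₁
    have hgb : δ ≤ (T₁ - T₂) * dist x y := by
      rw [← hdistb]
      exact hgap _ (frontier_subset_closure hbfr₂) _ hbfr₁
    have hb₂cl : Bornology.IsBounded (closure D₂) := hb₂.closure
    have hLΔ : dist x y ≤ Δ :=
      Metric.dist_le_diam_of_mem hb₂cl (subset_closure hx) (subset_closure hy)
    have hdax : dist (y + S₂ • (x - y)) x = (S₂ - 1) * dist x y := by
      have e : (y + S₂ • (x - y)) - x = (S₂ - 1) • (x - y) := by module
      rw [dist_eq_norm, e, norm_smul, Real.norm_eq_abs, abs_of_pos (by linarith), hnd]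
    have hdby : dist (x + T₂ • (y - x)) y = (T₂ - 1) * dist x y := by
      have e : (x + T₂ • (y - x)) - y = (T₂ - 1) • (y - x) := by module
      rw [dist_eq_norm, e, norm_smul, Real.norm_eq_abs, abs_of_pos (by linarith), hnd']
    have hsA2 : (S₂ - 1) * dist x y ≤ Δ := by
      rw [← hdax]
      exact Metric.dist_le_diam_of_mem hb₂cl (frontier_subset_closure hafr₂) (subset_closure hx)
    have hsB2 : (T₂ - 1) * dist x y ≤ Δ := by
      rw [← hdby]
      exact Metric.dist_le_diam_of_mem hb₂cl (frontier_subset_closure hbfr₂) (subset_closure hy)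
    have hkA := key_ineq (L := dist x y) (s := (S₂ - 1) * dist x y) (δ := δ) (Δ := Δ)
      (s' := (S₁ - 1) * dist x y) hL (by nlinarith) hδ (by nlinarith) hLΔ hsA2
    have hkB := key_ineq (L := dist x y) (s := (T₂ - 1) * dist x y) (δ := δ) (Δ := Δ)
      (s' := (T₁ - 1) * dist x y) hL (by nlinarith) hδ (by nlinarith) hLΔ hsB2
    rw [hval₁, hval₂]
    set p₁ := Real.log (1 + dist x y / ((S₁ - 1) * dist x y))
    set q₁ := Real.log (1 + dist x y / ((T₁ - 1) * dist x y))
    set p₂ := Real.log (1 + dist x y / ((S₂ - 1) * dist x y))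
    set q₂ := Real.log (1 + dist x y / ((T₂ - 1) * dist x y))
    calc (1 + δ / (2 * (Δ + 1))) * (1 / 2 * (p₁ + q₁))
        = 1 / 2 * ((1 + δ / (2 * (Δ + 1))) * p₁ + (1 + δ / (2 * (Δ + 1))) * q₁) := by ring
      _ ≤ 1 / 2 * (p₂ + q₂) := by linarith
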